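/- The space of weakly continuous operators on M(Ω) (operators given by bounded transition kernels) is a vector lattice with the ordering inherited from L(M(Ω)): for every weakly continuous operator T with kernel k, the operator with kernel |k| is an upper bound of T and −T, and is the least such bound among weakly continuous operators. -/

import Mathlib

open MeasureTheory Topology Filter
open scoped NNReal ENNReal BoundedContinuousFunction

noncomputable def sInt {Ω : Type*} [MeasurableSpace Ω] (μ : SignedMeasure Ω) (f : Ω → ℝ) : ℝ :=
  (∫ x, f x ∂μ.toJordanDecomposition.posPart) - ∫ x, f x ∂μ.toJordanDecomposition.negPart

def IsTransKernel {Ω : Type*} [MeasurableSpace Ω] (k : Ω → SignedMeasure Ω) : Prop :=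
  ∀ A : Set Ω, MeasurableSet A → Measurable fun x => k x A

def IsBddKernel {Ω : Type*} [MeasurableSpace Ω] (k : Ω → SignedMeasure Ω) : Prop :=
  IsTransKernel k ∧ ∃ C : ℝ≥0, ∀ x, (k x).totalVariation Set.univ ≤ C

def GivenByKernel {Ω : Type*} [MeasurableSpace Ω]
    (T : SignedMeasure Ω →ₗ[ℝ] SignedMeasure Ω) (k : Ω → SignedMeasure Ω) : Prop :=
  ∀ (μ : SignedMeasure Ω) (A : Set Ω), MeasurableSet A → T μ A = sInt μ (fun x => k x A)

def IsBdMeasurable {Ω : Type*} [MeasurableSpace Ω] (f : Ω → ℝ) : Prop :=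
  Measurable f ∧ ∃ C : ℝ, ∀ x, |f x| ≤ C

instance totalVariation_isFiniteMeasure {Ω : Type*} [MeasurableSpace Ω] (μ : SignedMeasure Ω) :
    IsFiniteMeasure μ.totalVariation := by
  unfold SignedMeasure.totalVariation; infer_instance

open MeasurableSpace
open scoped symmDiff

section Aux

variable {Ω : Type*} [MeasurableSpace Ω]

lemma jordan_apply (μ : SignedMeasure Ω) {A : Set Ω} (hA : MeasurableSet A) :
    μ A = (μ.toJordanDecomposition.posPart A).toReal
      - (μ.toJordanDecomposition.negPart A).toReal := by
  conv_lhs => rw [← μ.toSignedMeasure_toJordanDecomposition]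
  rw [JordanDecomposition.toSignedMeasure, VectorMeasure.sub_apply,
    Measure.toSignedMeasure_apply_measurable hA, Measure.toSignedMeasure_apply_measurable hA]
  rfl

lemma tv_apply (μ : SignedMeasure Ω) (A : Set Ω) :
    (μ.totalVariation A).toReal = (μ.toJordanDecomposition.posPart A).toReal
      + (μ.toJordanDecomposition.negPart A).toReal := by
  rw [SignedMeasure.totalVariation, Measure.add_apply,
    ENNReal.toReal_add (measure_ne_top _ _) (measure_ne_top _ _)]

lemma abs_apply_le (μ : SignedMeasure Ω) {A : Set Ω} (hA : MeasurableSet A) :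
    |μ A| ≤ (μ.totalVariation A).toReal := by
  rw [jordan_apply μ hA, tv_apply]
  have h1 := ENNReal.toReal_nonneg (a := μ.toJordanDecomposition.posPart A)
  have h2 := ENNReal.toReal_nonneg (a := μ.toJordanDecomposition.negPart A)
  rw [abs_le]; constructor <;> linarith

lemma tv_mono (μ : SignedMeasure Ω) {A B : Set Ω} (h : A ⊆ B) :
    (μ.totalVariation A).toReal ≤ (μ.totalVariation B).toReal :=
  ENNReal.toReal_mono (measure_ne_top _ _) (measure_mono h)

lemma apply_sub_apply_le (μ : SignedMeasure Ω) {A B : Set Ω} (hA : MeasurableSet A)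
    (hB : MeasurableSet B) : |μ A - μ B| ≤ (μ.totalVariation (A ∆ B)).toReal := by
  have h1 : μ A = μ (A ∩ B) + μ (A \ B) := by
    rw [← VectorMeasure.of_union (Set.disjoint_of_subset_left Set.inter_subset_right
      Set.disjoint_sdiff_right) (hA.inter hB) (hA.diff hB), Set.inter_union_diff]
  have h2 : μ B = μ (A ∩ B) + μ (B \ A) := by
    rw [← VectorMeasure.of_union (Set.disjoint_of_subset_left Set.inter_subset_left
      Set.disjoint_sdiff_right) (hA.inter hB) (hB.diff hA), Set.inter_comm, Set.inter_union_diff]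
  have h3 : |μ (A \ B)| ≤ (μ.totalVariation (A \ B)).toReal := abs_apply_le μ (hA.diff hB)
  have h4 : |μ (B \ A)| ≤ (μ.totalVariation (B \ A)).toReal := abs_apply_le μ (hB.diff hA)
  have h5 : (μ.totalVariation (A \ B)).toReal + (μ.totalVariation (B \ A)).toReal
      = (μ.totalVariation (A ∆ B)).toReal := by
    rw [Set.symmDiff_def, measure_union disjoint_sdiff_sdiff (hB.diff hA),
      ENNReal.toReal_add (measure_ne_top _ _) (measure_ne_top _ _)]
  have h6 : μ A - μ B = μ (A \ B) - μ (B \ A) := by rw [h1, h2]; ring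
  rw [h6]
  calc |μ (A \ B) - μ (B \ A)| ≤ |μ (A \ B)| + |μ (B \ A)| := abs_sub _ _
    _ ≤ _ := by rw [← h5]; exact add_le_add h3 h4

lemma measure_add_cancel {p n p' n' : Measure Ω} [IsFiniteMeasure p] [IsFiniteMeasure n]
    [IsFiniteMeasure p'] [IsFiniteMeasure n']
    (h : ∀ A, MeasurableSet A → (p A).toReal - (n A).toReal = (p' A).toReal - (n' A).toReal) :
    p + n' = p' + n := by
  ext A hA
  rw [Measure.add_apply, Measure.add_apply]
  have := h A hA
  refine (ENNReal.toReal_eq_toReal_iff' (by finiteness) (by finiteness)).mp ?_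
  rw [ENNReal.toReal_add (measure_ne_top _ _) (measure_ne_top _ _),
    ENNReal.toReal_add (measure_ne_top _ _) (measure_ne_top _ _)]
  linarith

lemma integrable_of_bound (ν : Measure Ω) [IsFiniteMeasure ν] {f : Ω → ℝ} (hf : Measurable f)
    {C : ℝ} (hC : ∀ x, |f x| ≤ C) : Integrable f ν :=
  ⟨hf.aestronglyMeasurable,
    HasFiniteIntegral.of_bounded (C := C) (ae_of_all _ (by simpa [Real.norm_eq_abs] using hC))⟩

lemma sInt_eq_of_repr (μ : SignedMeasure Ω) (p n : Measure Ω) [IsFiniteMeasure p]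
    [IsFiniteMeasure n] (h : ∀ A, MeasurableSet A → μ A = (p A).toReal - (n A).toReal)
    {f : Ω → ℝ} (hf : Measurable f) {C : ℝ} (hC : ∀ x, |f x| ≤ C) :
    sInt μ f = ∫ x, f x ∂p - ∫ x, f x ∂n := by
  have key : p + μ.toJordanDecomposition.negPart = μ.toJordanDecomposition.posPart + n :=
    measure_add_cancel (fun A hA => by rw [← h A hA, ← jordan_apply μ hA])
  have h1 : ∫ x, f x ∂p + ∫ x, f x ∂μ.toJordanDecomposition.negPart
      = ∫ x, f x ∂μ.toJordanDecomposition.posPart + ∫ x, f x ∂n := by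
    rw [← integral_add_measure (integrable_of_bound _ hf hC) (integrable_of_bound _ hf hC),
      ← integral_add_measure (integrable_of_bound _ hf hC) (integrable_of_bound _ hf hC), key]
  simp only [sInt]; linarith

lemma jd_negPart_eq_zero (μ : SignedMeasure Ω) (hμ : 0 ≤ μ) :
    μ.toJordanDecomposition.negPart = 0 := by
  obtain ⟨w, hw, hpw, hnwc⟩ := μ.toJordanDecomposition.mutuallySingular
  rw [← Measure.measure_univ_eq_zero]
  have huniv : (Set.univ : Set Ω) = w ∪ wᶜ := (Set.union_compl_self w).symm
  rw [huniv, measure_union disjoint_compl_right hw.compl, hnwc, add_zero]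
  have h1 : μ w = (μ.toJordanDecomposition.posPart w).toReal
      - (μ.toJordanDecomposition.negPart w).toReal := jordan_apply μ hw
  rw [hpw] at h1
  have h2 : (0 : ℝ) ≤ μ w := by
    have := hμ w hw
    simpa using this
  have h3 : (μ.toJordanDecomposition.negPart w).toReal = 0 := by
    simp at h1
    have := ENNReal.toReal_nonneg (a := μ.toJordanDecomposition.negPart w)
    linarith
  exact (ENNReal.toReal_eq_zero_iff _).mp h3 |>.resolve_right (measure_ne_top _ _)

lemma sInt_nonneg_repr (μ : SignedMeasure Ω) (hμ : 0 ≤ μ) (f : Ω → ℝ) :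
    sInt μ f = ∫ x, f x ∂μ.toJordanDecomposition.posPart := by
  simp only [sInt, jd_negPart_eq_zero μ hμ, integral_zero_measure, sub_zero]

/-- On a set `A`, the total variation equals `μ (A ∩ P) - μ (A \ P)` for a Hahn set `P`. -/
lemma tv_eq_sub (μ : SignedMeasure Ω) {A : Set Ω} (hA : MeasurableSet A) :
    ∃ P : Set Ω, MeasurableSet P ∧
      (μ.totalVariation A).toReal = μ (A ∩ P) - μ (A \ P) := by
  obtain ⟨w, hw, hpw, hnwc⟩ := μ.toJordanDecomposition.mutuallySingular
  refine ⟨wᶜ, hw.compl, ?_⟩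
  set p := μ.toJordanDecomposition.posPart
  set n := μ.toJordanDecomposition.negPart
  have hApos : p (A ∩ wᶜ) = p A := by
    have : p A = p (A ∩ wᶜ) + p (A ∩ w) := by
      rw [← measure_union (Set.disjoint_of_subset Set.inter_subset_right Set.inter_subset_right
        disjoint_compl_left) (hA.inter hw)]
      congr 1
      rw [← Set.inter_union_distrib_left, Set.compl_union_self, Set.inter_univ]
    have h0 : p (A ∩ w) = 0 := measure_mono_null Set.inter_subset_right hpw
    rw [this, h0, add_zero]
  have hnneg : n (A ∩ wᶜ) = 0 := measure_mono_null Set.inter_subset_right hnwc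
  have hAdiff : A \ wᶜ = A ∩ w := by simp [Set.diff_eq]
  have hpdiff : p (A ∩ w) = 0 := measure_mono_null Set.inter_subset_right hpw
  have hndiff : n (A ∩ w) = n A := by
    have : n A = n (A ∩ wᶜ) + n (A ∩ w) := by
      rw [← measure_union (Set.disjoint_of_subset Set.inter_subset_right Set.inter_subset_right
        disjoint_compl_left) (hA.inter hw)]
      congr 1
      rw [← Set.inter_union_distrib_left, Set.compl_union_self, Set.inter_univ]
    rw [this, hnneg, zero_add]
  rw [jordan_apply μ (hA.inter hw.compl), hAdiff, jordan_apply μ (hA.inter hw),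
    tv_apply, hApos, hnneg, hpdiff, hndiff]
  simp
  rfl

lemma measurable_tv [CountablyGenerated Ω] {k : Ω → SignedMeasure Ω} (hk : IsTransKernel k)
    {A : Set Ω} (hA : MeasurableSet A) :
    Measurable fun x => ((k x).totalVariation A).toReal := by
  set 𝒜 : Set (Set Ω) := generateSetAlgebra (countableGeneratingSet Ω) with h𝒜
  have hgen : generateFrom 𝒜 = ‹MeasurableSpace Ω› := by
    rw [h𝒜, generateFrom_generateSetAlgebra_eq, generateFrom_countableGeneratingSet]
  have hmeas𝒜 : ∀ B ∈ 𝒜, MeasurableSet B := fun B hB => hgen ▸ measurableSet_generateFrom hB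
  haveI : Countable ↥𝒜 :=
    (countable_generateSetAlgebra (countable_countableGeneratingSet (α := Ω))).to_subtype
  haveI : Nonempty ↥𝒜 := ⟨⟨∅, generateSetAlgebra.empty⟩⟩
  have key : ∀ x, ((k x).totalVariation A).toReal
      = ⨆ B : ↥𝒜, (k x (A ∩ ↑B) - k x (A \ ↑B)) := by
    intro x
    set ν := (k x).totalVariation
    have ub : ∀ B : Set Ω, MeasurableSet B → k x (A ∩ B) - k x (A \ B) ≤ (ν A).toReal := by
      intro B hB
      have h1 : k x (A ∩ B) ≤ (ν (A ∩ B)).toReal :=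
        le_of_abs_le (abs_apply_le _ (hA.inter hB))
      have h2 : -(k x (A \ B)) ≤ (ν (A \ B)).toReal := by
        have := abs_apply_le (k x) (hA.diff hB)
        rw [abs_le] at this; linarith [this.1]
      have h3 : (ν (A ∩ B)).toReal + (ν (A \ B)).toReal = (ν A).toReal := by
        rw [← ENNReal.toReal_add (measure_ne_top _ _) (measure_ne_top _ _),
          ← measure_union (Set.disjoint_of_subset_left Set.inter_subset_right
            Set.disjoint_sdiff_right) (hA.diff hB), Set.inter_union_diff]
      linarith
    have bdd : BddAbove (Set.range fun B : ↥𝒜 => (k x (A ∩ ↑B) - k x (A \ ↑B))) := by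
      refine ⟨(ν A).toReal, ?_⟩
      rintro _ ⟨B, rfl⟩
      exact ub _ (hmeas𝒜 _ B.2)
    refine le_antisymm ?_ (ciSup_le fun B => ub _ (hmeas𝒜 _ B.2))
    refine le_of_forall_pos_le_add fun ε hε => ?_
    obtain ⟨P, hP, hPeq⟩ := tv_eq_sub (k x) hA
    have hdense : ν.MeasureDense 𝒜 :=
      Measure.MeasureDense.of_generateFrom_isSetAlgebra_finite
        ν isSetAlgebra_generateSetAlgebra hgen.symm
    obtain ⟨B, hB𝒜, hBP⟩ := hdense.approx P hP (measure_ne_top _ _) (ε / 2) (by linarith)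
    have hB : MeasurableSet B := hmeas𝒜 _ hB𝒜
    have hsub1 : (A ∩ B) ∆ (A ∩ P) ⊆ B ∆ P := fun y hy => by
      simp [Set.mem_symmDiff] at hy ⊢; tauto
    have hsub2 : (A \ B) ∆ (A \ P) ⊆ B ∆ P := fun y hy => by
      simp [Set.mem_symmDiff] at hy ⊢; tauto
    have hBPr : (ν (B ∆ P)).toReal < ε / 2 := by
      have h1 : ν (B ∆ P) < ENNReal.ofReal (ε / 2) := by rwa [symmDiff_comm]
      have := (ENNReal.toReal_lt_toReal (measure_ne_top _ _) ENNReal.ofReal_ne_top).mpr h1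
      rwa [ENNReal.toReal_ofReal (by linarith)] at this
    have e1 : |k x (A ∩ B) - k x (A ∩ P)| ≤ (ν (B ∆ P)).toReal :=
      le_trans (apply_sub_apply_le (k x) (hA.inter hB) (hA.inter hP)) (tv_mono _ hsub1)
    have e2 : |k x (A \ B) - k x (A \ P)| ≤ (ν (B ∆ P)).toReal :=
      le_trans (apply_sub_apply_le (k x) (hA.diff hB) (hA.diff hP)) (tv_mono _ hsub2)
    have hle : (ν A).toReal ≤ (k x (A ∩ ↑(⟨B, hB𝒜⟩ : ↥𝒜)) - k x (A \ ↑(⟨B, hB𝒜⟩ : ↥𝒜))) + ε := by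
      rw [hPeq]
      rw [abs_le] at e1 e2
      simp only
      linarith [e1.1, e1.2, e2.1, e2.2]
    exact le_trans hle (add_le_add_left (le_ciSup bdd (⟨B, hB𝒜⟩ : ↥𝒜)) ε)
  have : (fun x => ((k x).totalVariation A).toReal)
      = fun x => ⨆ B : ↥𝒜, (k x (A ∩ ↑B) - k x (A \ ↑B)) := funext key
  rw [this]
  exact Measurable.iSup fun B =>
    (hk _ (hA.inter (hmeas𝒜 _ B.2))).sub (hk _ (hA.diff (hmeas𝒜 _ B.2)))

section opOf

variable (κ : Ω → Measure Ω) (hκ : Measurable κ) (C : ℝ≥0) (hb : ∀ x, κ x Set.univ ≤ C)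
include hκ hb

lemma isFiniteMeasure_bind (ν : Measure Ω) [IsFiniteMeasure ν] :
    IsFiniteMeasure (ν.bind κ) := by
  constructor
  rw [Measure.bind_apply MeasurableSet.univ hκ.aemeasurable]
  calc ∫⁻ x, κ x Set.univ ∂ν ≤ ∫⁻ _, (C : ℝ≥0∞) ∂ν := lintegral_mono hb
    _ = C * ν Set.univ := by rw [lintegral_const]
    _ < ⊤ := by finiteness

omit hb in
lemma measurable_kernel_apply {A : Set Ω} (hA : MeasurableSet A) :
    Measurable fun x => (κ x A).toReal :=
  ((Measure.measurable_coe hA).comp hκ).ennreal_toReal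

omit hκ in
lemma kernel_apply_bound (x : Ω) {A : Set Ω} : |(κ x A).toReal| ≤ (C : ℝ) := by
  rw [abs_of_nonneg ENNReal.toReal_nonneg]
  have h1 : κ x A ≤ (C : ℝ≥0∞) := le_trans (measure_mono (Set.subset_univ A)) (hb x)
  calc (κ x A).toReal ≤ ((C : ℝ≥0∞)).toReal := ENNReal.toReal_mono ENNReal.coe_ne_top h1
    _ = (C : ℝ) := ENNReal.coe_toReal C

lemma bind_toSigned_apply (ν : Measure Ω) [IsFiniteMeasure ν] {A : Set Ω} (hA : MeasurableSet A) :
    haveI := isFiniteMeasure_bind κ hκ C hb ν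
    (ν.bind κ).toSignedMeasure A = ∫ x, (κ x A).toReal ∂ν := by
  haveI := isFiniteMeasure_bind κ hκ C hb ν
  rw [Measure.toSignedMeasure_apply_measurable hA, measureReal_def, Measure.bind_apply hA hκ.aemeasurable]
  have hm : AEMeasurable (fun a => κ a A) ν := ((Measure.measurable_coe hA).comp hκ).aemeasurable
  exact (integral_toReal hm (ae_of_all _ fun x => lt_of_le_of_lt
    (le_trans (measure_mono (Set.subset_univ A)) (hb x)) ENNReal.coe_lt_top)).symm

noncomputable def opOfFun (μ : SignedMeasure Ω) : SignedMeasure Ω :=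
  haveI := isFiniteMeasure_bind κ hκ C hb μ.toJordanDecomposition.posPart
  haveI := isFiniteMeasure_bind κ hκ C hb μ.toJordanDecomposition.negPart
  (μ.toJordanDecomposition.posPart.bind κ).toSignedMeasure
    - (μ.toJordanDecomposition.negPart.bind κ).toSignedMeasure

lemma opOfFun_apply (μ : SignedMeasure Ω) {A : Set Ω} (hA : MeasurableSet A) :
    opOfFun κ hκ C hb μ A = ∫ x, (κ x A).toReal ∂μ.toJordanDecomposition.posPart
      - ∫ x, (κ x A).toReal ∂μ.toJordanDecomposition.negPart := by
  rw [opOfFun, VectorMeasure.sub_apply, bind_toSigned_apply κ hκ C hb _ hA,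
    bind_toSigned_apply κ hκ C hb _ hA]

lemma opOfFun_eq_of_repr (μ : SignedMeasure Ω) (p n : Measure Ω) [IsFiniteMeasure p]
    [IsFiniteMeasure n] (h : ∀ A, MeasurableSet A → μ A = (p A).toReal - (n A).toReal)
    {A : Set Ω} (hA : MeasurableSet A) :
    opOfFun κ hκ C hb μ A = ∫ x, (κ x A).toReal ∂p - ∫ x, (κ x A).toReal ∂n := by
  have key : p + μ.toJordanDecomposition.negPart = μ.toJordanDecomposition.posPart + n :=
    measure_add_cancel (fun B hB => by rw [← h B hB, ← jordan_apply μ hB])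
  have hf := measurable_kernel_apply κ hκ hA
  have hbd : ∀ x, |(κ x A).toReal| ≤ (C : ℝ) := fun x => kernel_apply_bound κ C hb x
  have h1 : ∫ x, (κ x A).toReal ∂p + ∫ x, (κ x A).toReal ∂μ.toJordanDecomposition.negPart
      = ∫ x, (κ x A).toReal ∂μ.toJordanDecomposition.posPart + ∫ x, (κ x A).toReal ∂n := by
    rw [← integral_add_measure (integrable_of_bound _ hf hbd) (integrable_of_bound _ hf hbd),
      ← integral_add_measure (integrable_of_bound _ hf hbd) (integrable_of_bound _ hf hbd), key]
  rw [opOfFun_apply κ hκ C hb μ hA]; linarith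

noncomputable def opOf : SignedMeasure Ω →ₗ[ℝ] SignedMeasure Ω where
  toFun := opOfFun κ hκ C hb
  map_add' := fun μ ν => by
    ext A hA
    have hrepr : ∀ B, MeasurableSet B → (μ + ν) B
        = ((μ.toJordanDecomposition.posPart + ν.toJordanDecomposition.posPart) B).toReal
          - ((μ.toJordanDecomposition.negPart + ν.toJordanDecomposition.negPart) B).toReal := by
      intro B hB
      rw [VectorMeasure.add_apply, jordan_apply μ hB, jordan_apply ν hB,
        Measure.add_apply, Measure.add_apply,
        ENNReal.toReal_add (measure_ne_top _ _) (measure_ne_top _ _),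
        ENNReal.toReal_add (measure_ne_top _ _) (measure_ne_top _ _)]
      ring
    rw [VectorMeasure.add_apply,
      opOfFun_eq_of_repr κ hκ C hb (μ + ν) _ _ hrepr hA,
      opOfFun_apply κ hκ C hb μ hA, opOfFun_apply κ hκ C hb ν hA,
      integral_add_measure (integrable_of_bound _ (measurable_kernel_apply κ hκ hA)
        (fun x => kernel_apply_bound κ C hb x))
        (integrable_of_bound _ (measurable_kernel_apply κ hκ hA)
        (fun x => kernel_apply_bound κ C hb x)),
      integral_add_measure (integrable_of_bound _ (measurable_kernel_apply κ hκ hA)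
        (fun x => kernel_apply_bound κ C hb x))
        (integrable_of_bound _ (measurable_kernel_apply κ hκ hA)
        (fun x => kernel_apply_bound κ C hb x))]
    ring
  map_smul' := fun r μ => by
    ext A hA
    rcases le_or_gt 0 r with hr | hr
    · have hrepr : ∀ B, MeasurableSet B → (r • μ) B
          = ((r.toNNReal • μ.toJordanDecomposition.posPart) B).toReal
            - ((r.toNNReal • μ.toJordanDecomposition.negPart) B).toReal := by
        intro B hB
        rw [VectorMeasure.smul_apply, jordan_apply μ hB]
        simp only [Measure.smul_apply, ENNReal.smul_def, smul_eq_mul, ENNReal.toReal_mul,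
          ENNReal.coe_toReal, Real.coe_toNNReal r hr]
        ring
      rw [RingHom.id_apply, VectorMeasure.smul_apply,
        opOfFun_eq_of_repr κ hκ C hb (r • μ) _ _ hrepr hA,
        opOfFun_apply κ hκ C hb μ hA]
      rw [integral_smul_nnreal_measure, integral_smul_nnreal_measure]
      simp only [NNReal.smul_def, Real.coe_toNNReal r hr, smul_eq_mul]
      ring
    · have hrepr : ∀ B, MeasurableSet B → (r • μ) B
          = (((-r).toNNReal • μ.toJordanDecomposition.negPart) B).toReal
            - (((-r).toNNReal • μ.toJordanDecomposition.posPart) B).toReal := by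
        intro B hB
        rw [VectorMeasure.smul_apply, jordan_apply μ hB]
        simp only [Measure.smul_apply, ENNReal.smul_def, smul_eq_mul, ENNReal.toReal_mul,
          ENNReal.coe_toReal, Real.coe_toNNReal (-r) (by linarith : (0:ℝ) ≤ -r)]
        ring
      rw [RingHom.id_apply, VectorMeasure.smul_apply,
        opOfFun_eq_of_repr κ hκ C hb (r • μ) _ _ hrepr hA,
        opOfFun_apply κ hκ C hb μ hA]
      rw [integral_smul_nnreal_measure, integral_smul_nnreal_measure]
      simp only [NNReal.smul_def, Real.coe_toNNReal (-r) (by linarith : (0:ℝ) ≤ -r), smul_eq_mul]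
      ring

lemma opOf_apply (μ : SignedMeasure Ω) {A : Set Ω} (hA : MeasurableSet A) :
    opOf κ hκ C hb μ A = ∫ x, (κ x A).toReal ∂μ.toJordanDecomposition.posPart
      - ∫ x, (κ x A).toReal ∂μ.toJordanDecomposition.negPart :=
  opOfFun_apply κ hκ C hb μ hA

end opOf

/-- Bound for a bounded kernel. -/
lemma sm_bound {k : Ω → SignedMeasure Ω} {C : ℝ≥0}
    (hC : ∀ x, (k x).totalVariation Set.univ ≤ C) {A : Set Ω} (hA : MeasurableSet A) (x : Ω) :
    |k x A| ≤ (C : ℝ) :=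
  le_trans (abs_apply_le _ hA) (le_trans (le_abs_self _)
    (kernel_apply_bound (fun y => (k y).totalVariation) C hC x))

end Aux

theorem stmt8 {Ω : Type*} [TopologicalSpace Ω] [PolishSpace Ω] [MeasurableSpace Ω] [BorelSpace Ω]
    (T : SignedMeasure Ω →ₗ[ℝ] SignedMeasure Ω) (k : Ω → SignedMeasure Ω)
    (hk : IsBddKernel k) (hT : GivenByKernel T k) :
    ∃ U : SignedMeasure Ω →ₗ[ℝ] SignedMeasure Ω,
      GivenByKernel U (fun x => ((k x).totalVariation).toSignedMeasure) ∧
      (∀ μ : SignedMeasure Ω, 0 ≤ μ → T μ ≤ U μ ∧ -(T μ) ≤ U μ) ∧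
      ∀ (S : SignedMeasure Ω →ₗ[ℝ] SignedMeasure Ω) (m : Ω → SignedMeasure Ω),
        IsBddKernel m → GivenByKernel S m →
        (∀ μ : SignedMeasure Ω, 0 ≤ μ → T μ ≤ S μ ∧ -(T μ) ≤ S μ) →
        ∀ μ : SignedMeasure Ω, 0 ≤ μ → U μ ≤ S μ := by
  obtain ⟨htk, C, hC⟩ := hk
  set κ : Ω → Measure Ω := fun x => (k x).totalVariation with hκdef
  have hκA : ∀ A : Set Ω, MeasurableSet A → Measurable fun x => κ x A := by
    intro A hA
    have h1 : (fun x => κ x A) = fun x => ENNReal.ofReal (((k x).totalVariation A).toReal) :=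
      funext fun x => (ENNReal.ofReal_toReal (measure_ne_top _ _)).symm
    rw [h1]
    exact ENNReal.measurable_ofReal.comp (measurable_tv htk hA)
  have hκ : Measurable κ := Measure.measurable_of_measurable_coe _ hκA
  refine ⟨opOf κ hκ C hC, ?_, ?_, ?_⟩
  · -- GivenByKernel
    intro μ A hA
    have hfeq : (fun x => ((k x).totalVariation).toSignedMeasure A) = fun x => (κ x A).toReal :=
      funext fun x => Measure.toSignedMeasure_apply_measurable hA
    rw [hfeq, opOf_apply κ hκ C hC μ hA]
    simp only [sInt]
  · -- upper bound
    intro μ hμ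
    constructor
    · intro A hA
      rw [hT μ A hA, sInt_nonneg_repr μ hμ, opOf_apply κ hκ C hC μ hA,
        jd_negPart_eq_zero μ hμ, integral_zero_measure, sub_zero]
      exact integral_mono (integrable_of_bound _ (htk A hA) (fun y => sm_bound hC hA y))
        (integrable_of_bound _ (measurable_kernel_apply κ hκ hA)
          (fun y => kernel_apply_bound κ C hC y))
        (fun y => le_of_abs_le (abs_apply_le (k y) hA))
    · intro A hA
      rw [VectorMeasure.neg_apply, hT μ A hA, sInt_nonneg_repr μ hμ, opOf_apply κ hκ C hC μ hA,
        jd_negPart_eq_zero μ hμ, integral_zero_measure, sub_zero, ← integral_neg]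
      exact integral_mono (integrable_of_bound _ (htk A hA).neg
          (fun y => by rw [abs_neg]; exact sm_bound hC hA y))
        (integrable_of_bound _ (measurable_kernel_apply κ hκ hA)
          (fun y => kernel_apply_bound κ C hC y))
        (fun y => by
          have := abs_apply_le (k y) hA
          rw [abs_le] at this
          have h1 := this.1
          simp only [neg_le] at h1 ⊢
          linarith)
  · -- minimality
    intro S m hm hS hTS μ hμ
    obtain ⟨htm, Cm, hCm⟩ := hm
    have hpt : ∀ x (A : Set Ω), MeasurableSet A → k x A ≤ m x A ∧ -(k x A) ≤ m x A := by
      intro x A hA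
      set δ : SignedMeasure Ω := (Measure.dirac x).toSignedMeasure with hδdef
      have hδ : 0 ≤ δ := by
        intro B hB
        rw [hδdef, VectorMeasure.zero_apply, Measure.toSignedMeasure_apply_measurable hB]
        exact ENNReal.toReal_nonneg
      have hrepr : ∀ B, MeasurableSet B →
          δ B = ((Measure.dirac x) B).toReal - ((0 : Measure Ω) B).toReal := fun B hB => by
        rw [hδdef, Measure.toSignedMeasure_apply_measurable hB, measureReal_def]; simp
      have hTδ : T δ A = k x A := by
        rw [hT δ A hA, sInt_eq_of_repr δ (Measure.dirac x) 0 hrepr (htk A hA)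
          (fun y => sm_bound hC hA y), integral_zero_measure, sub_zero,
          integral_dirac (fun y => k y A) x]
      have hSδ : S δ A = m x A := by
        rw [hS δ A hA, sInt_eq_of_repr δ (Measure.dirac x) 0 hrepr (htm A hA)
          (fun y => sm_bound hCm hA y), integral_zero_measure, sub_zero,
          integral_dirac (fun y => m y A) x]
      refine ⟨?_, ?_⟩
      · have := (hTS δ hδ).1 A hA
        rwa [hTδ, hSδ] at this
      · have := (hTS δ hδ).2 A hA
        rwa [VectorMeasure.neg_apply, hTδ, hSδ] at this
    have hpt2 : ∀ x (A : Set Ω), MeasurableSet A → (κ x A).toReal ≤ m x A := by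
      intro x A hA
      obtain ⟨P, hP, hPeq⟩ := tv_eq_sub (k x) hA
      have hmx : m x A = m x (A ∩ P) + m x (A \ P) := by
        rw [← VectorMeasure.of_union (Set.disjoint_of_subset_left Set.inter_subset_right
          Set.disjoint_sdiff_right) (hA.inter hP) (hA.diff hP), Set.inter_union_diff]
      have h1 := (hpt x (A ∩ P) (hA.inter hP)).1
      have h2 := (hpt x (A \ P) (hA.diff hP)).2
      rw [show (κ x A).toReal = ((k x).totalVariation A).toReal from rfl, hPeq, hmx]
      linarith
    intro A hA
    rw [opOf_apply κ hκ C hC μ hA, jd_negPart_eq_zero μ hμ, integral_zero_measure, sub_zero,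
      hS μ A hA, sInt_nonneg_repr μ hμ]
    exact integral_mono (integrable_of_bound _ (measurable_kernel_apply κ hκ hA)
        (fun y => kernel_apply_bound κ C hC y))
      (integrable_of_bound _ (htm A hA) (fun y => sm_bound hCm hA y))
      (fun y => hpt2 y A hA)
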